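/- For every positive integer n, the group with presentation ⟨a, b, c, d, e, f | a = e^n c e^{-n}, e = c^n d c^{-n}, c = d^n e d^{-n}, f = d^n b d^{-n}, b = f^n d f^{-n}, a = b^n f b^{-n}⟩ (the n-th generalized knot group of the square knot from its standard six-arc diagram) is isomorphic to the group with presentation ⟨b, d, e | b d^n b^n = d^n b^n d, e d^n e^n = d^n e^n d, e^n d^n e d^{-n} e^{-n} = b^n d^n b d^{-n} b^{-n}⟩. -/
import Mathlib


/-- Relators of the n-th generalized knot group of the square knot from its standard
six-arc diagram: ⟨a, b, c, d, e, f | a = eⁿ c e⁻ⁿ, e = cⁿ d c⁻ⁿ, c = dⁿ e d⁻ⁿ,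
f = dⁿ b d⁻ⁿ, b = fⁿ d f⁻ⁿ, a = bⁿ f b⁻ⁿ⟩, with a, b, c, d, e, f = 0, 1, 2, 3, 4, 5. -/
def squareKnotDiagRels (n : ℕ) : Set (FreeGroup (Fin 6)) :=
  let a : FreeGroup (Fin 6) := FreeGroup.of 0
  let b : FreeGroup (Fin 6) := FreeGroup.of 1
  let c : FreeGroup (Fin 6) := FreeGroup.of 2
  let d : FreeGroup (Fin 6) := FreeGroup.of 3
  let e : FreeGroup (Fin 6) := FreeGroup.of 4
  let f : FreeGroup (Fin 6) := FreeGroup.of 5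
  {a * (e ^ n * c * (e ^ n)⁻¹)⁻¹,
   e * (c ^ n * d * (c ^ n)⁻¹)⁻¹,
   c * (d ^ n * e * (d ^ n)⁻¹)⁻¹,
   f * (d ^ n * b * (d ^ n)⁻¹)⁻¹,
   b * (f ^ n * d * (f ^ n)⁻¹)⁻¹,
   a * (b ^ n * f * (b ^ n)⁻¹)⁻¹}

/-- Relators of ⟨b, d, e | b dⁿ bⁿ = dⁿ bⁿ d, e dⁿ eⁿ = dⁿ eⁿ d,
eⁿ dⁿ e d⁻ⁿ e⁻ⁿ = bⁿ dⁿ b d⁻ⁿ b⁻ⁿ⟩, with b, d, e = 0, 1, 2. -/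
def GnSKRels (n : ℕ) : Set (FreeGroup (Fin 3)) :=
  let b : FreeGroup (Fin 3) := FreeGroup.of 0
  let d : FreeGroup (Fin 3) := FreeGroup.of 1
  let e : FreeGroup (Fin 3) := FreeGroup.of 2
  {b * d ^ n * b ^ n * (d ^ n * b ^ n * d)⁻¹,
   e * d ^ n * e ^ n * (d ^ n * e ^ n * d)⁻¹,
   e ^ n * d ^ n * e * (d ^ n)⁻¹ * (e ^ n)⁻¹ * (b ^ n * d ^ n * b * (d ^ n)⁻¹ * (b ^ n)⁻¹)⁻¹}

private lemma pg_rel_eq {α : Type*} {rels : Set (FreeGroup α)} {x y : FreeGroup α}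
    (h : x * y⁻¹ ∈ rels) : PresentedGroup.mk rels x = PresentedGroup.mk rels y :=
  mul_inv_eq_one.mp (by
    rw [← map_inv, ← map_mul]
    exact (QuotientGroup.eq_one_iff _).mpr (Subgroup.subset_normalClosure h))

/-- The map on generators from the 6-generator presentation to the 3-generator one. -/
def phiFun (n : ℕ) : Fin 6 → PresentedGroup (GnSKRels n) :=
  let B : PresentedGroup (GnSKRels n) := .of 0
  let D : PresentedGroup (GnSKRels n) := .of 1
  let E : PresentedGroup (GnSKRels n) := .of 2
  ![E ^ n * (D ^ n * E * (D ^ n)⁻¹) * (E ^ n)⁻¹, B, D ^ n * E * (D ^ n)⁻¹, D, E,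
    D ^ n * B * (D ^ n)⁻¹]

/-- The map on generators from the 3-generator presentation to the 6-generator one. -/
def psiFun (n : ℕ) : Fin 3 → PresentedGroup (squareKnotDiagRels n) :=
  ![.of 1, .of 3, .of 4]

lemma phiFun_0 (n : ℕ) : phiFun n 0 =
    (PresentedGroup.of 2 : PresentedGroup (GnSKRels n)) ^ n *
      (PresentedGroup.of 1 ^ n * PresentedGroup.of 2 * (PresentedGroup.of 1 ^ n)⁻¹) *
      ((PresentedGroup.of 2 : PresentedGroup (GnSKRels n)) ^ n)⁻¹ := rfl
lemma phiFun_1 (n : ℕ) : phiFun n 1 = PresentedGroup.of 0 := rfl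
lemma phiFun_2 (n : ℕ) : phiFun n 2 =
    (PresentedGroup.of 1 : PresentedGroup (GnSKRels n)) ^ n * PresentedGroup.of 2 *
      ((PresentedGroup.of 1 : PresentedGroup (GnSKRels n)) ^ n)⁻¹ := rfl
lemma phiFun_3 (n : ℕ) : phiFun n 3 = PresentedGroup.of 1 := rfl
lemma phiFun_4 (n : ℕ) : phiFun n 4 = PresentedGroup.of 2 := rfl
lemma phiFun_5 (n : ℕ) : phiFun n 5 =
    (PresentedGroup.of 1 : PresentedGroup (GnSKRels n)) ^ n * PresentedGroup.of 0 *
      ((PresentedGroup.of 1 : PresentedGroup (GnSKRels n)) ^ n)⁻¹ := rfl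
lemma psiFun_0 (n : ℕ) : psiFun n 0 = PresentedGroup.of 1 := rfl
lemma psiFun_1 (n : ℕ) : psiFun n 1 = PresentedGroup.of 3 := rfl
lemma psiFun_2 (n : ℕ) : psiFun n 2 = PresentedGroup.of 4 := rfl

theorem stmt_3 (n : ℕ) (hn : 0 < n) :
    Nonempty (PresentedGroup (squareKnotDiagRels n) ≃* PresentedGroup (GnSKRels n)) := by
  clear hn
  -- generators of the 3-generator group
  set B : PresentedGroup (GnSKRels n) := .of 0 with hB
  set D : PresentedGroup (GnSKRels n) := .of 1 with hD
  set E : PresentedGroup (GnSKRels n) := .of 2 with hE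
  -- generators of the 6-generator group
  set a : PresentedGroup (squareKnotDiagRels n) := .of 0 with ha
  set b : PresentedGroup (squareKnotDiagRels n) := .of 1 with hb
  set c : PresentedGroup (squareKnotDiagRels n) := .of 2 with hc
  set d : PresentedGroup (squareKnotDiagRels n) := .of 3 with hd
  set e : PresentedGroup (squareKnotDiagRels n) := .of 4 with he
  set f : PresentedGroup (squareKnotDiagRels n) := .of 5 with hf
  -- relations in the 3-generator group
  have h1 : B * D ^ n * B ^ n = D ^ n * B ^ n * D := by
    have := pg_rel_eq (rels := GnSKRels n)
      (x := FreeGroup.of 0 * FreeGroup.of 1 ^ n * FreeGroup.of 0 ^ n)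
      (y := FreeGroup.of 1 ^ n * FreeGroup.of 0 ^ n * FreeGroup.of 1)
      (Set.mem_insert _ _)
    simp only [map_mul, map_pow] at this
    exact this
  have h2 : E * D ^ n * E ^ n = D ^ n * E ^ n * D := by
    have := pg_rel_eq (rels := GnSKRels n)
      (x := FreeGroup.of 2 * FreeGroup.of 1 ^ n * FreeGroup.of 2 ^ n)
      (y := FreeGroup.of 1 ^ n * FreeGroup.of 2 ^ n * FreeGroup.of 1)
      (Set.mem_insert_of_mem _ (Set.mem_insert _ _))
    simp only [map_mul, map_pow] at this
    exact this
  have h3 : E ^ n * D ^ n * E * (D ^ n)⁻¹ * (E ^ n)⁻¹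
      = B ^ n * D ^ n * B * (D ^ n)⁻¹ * (B ^ n)⁻¹ := by
    have := pg_rel_eq (rels := GnSKRels n)
      (x := FreeGroup.of 2 ^ n * FreeGroup.of 1 ^ n * FreeGroup.of 2 *
        (FreeGroup.of 1 ^ n)⁻¹ * (FreeGroup.of 2 ^ n)⁻¹)
      (y := FreeGroup.of 0 ^ n * FreeGroup.of 1 ^ n * FreeGroup.of 0 *
        (FreeGroup.of 1 ^ n)⁻¹ * (FreeGroup.of 0 ^ n)⁻¹)
      (Set.mem_insert_of_mem _ (Set.mem_insert_of_mem _ rfl))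
    simp only [map_mul, map_pow, map_inv] at this
    exact this
  -- relations in the 6-generator group
  have k1 : a = e ^ n * c * (e ^ n)⁻¹ := by
    have := pg_rel_eq (rels := squareKnotDiagRels n)
      (x := FreeGroup.of 0)
      (y := FreeGroup.of 4 ^ n * FreeGroup.of 2 * (FreeGroup.of 4 ^ n)⁻¹)
      (Set.mem_insert _ _)
    simp only [map_mul, map_pow, map_inv] at this
    exact this
  have k2 : e = c ^ n * d * (c ^ n)⁻¹ := by
    have := pg_rel_eq (rels := squareKnotDiagRels n)
      (x := FreeGroup.of 4)
      (y := FreeGroup.of 2 ^ n * FreeGroup.of 3 * (FreeGroup.of 2 ^ n)⁻¹)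
      (Set.mem_insert_of_mem _ (Set.mem_insert _ _))
    simp only [map_mul, map_pow, map_inv] at this
    exact this
  have k3 : c = d ^ n * e * (d ^ n)⁻¹ := by
    have := pg_rel_eq (rels := squareKnotDiagRels n)
      (x := FreeGroup.of 2)
      (y := FreeGroup.of 3 ^ n * FreeGroup.of 4 * (FreeGroup.of 3 ^ n)⁻¹)
      (Set.mem_insert_of_mem _ (Set.mem_insert_of_mem _ (Set.mem_insert _ _)))
    simp only [map_mul, map_pow, map_inv] at this
    exact this
  have k4 : f = d ^ n * b * (d ^ n)⁻¹ := by
    have := pg_rel_eq (rels := squareKnotDiagRels n)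
      (x := FreeGroup.of 5)
      (y := FreeGroup.of 3 ^ n * FreeGroup.of 1 * (FreeGroup.of 3 ^ n)⁻¹)
      (Set.mem_insert_of_mem _ (Set.mem_insert_of_mem _ (Set.mem_insert_of_mem _
        (Set.mem_insert _ _))))
    simp only [map_mul, map_pow, map_inv] at this
    exact this
  have k5 : b = f ^ n * d * (f ^ n)⁻¹ := by
    have := pg_rel_eq (rels := squareKnotDiagRels n)
      (x := FreeGroup.of 1)
      (y := FreeGroup.of 5 ^ n * FreeGroup.of 3 * (FreeGroup.of 5 ^ n)⁻¹)
      (Set.mem_insert_of_mem _ (Set.mem_insert_of_mem _ (Set.mem_insert_of_mem _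
        (Set.mem_insert_of_mem _ (Set.mem_insert _ _)))))
    simp only [map_mul, map_pow, map_inv] at this
    exact this
  have k6 : a = b ^ n * f * (b ^ n)⁻¹ := by
    have := pg_rel_eq (rels := squareKnotDiagRels n)
      (x := FreeGroup.of 0)
      (y := FreeGroup.of 1 ^ n * FreeGroup.of 5 * (FreeGroup.of 1 ^ n)⁻¹)
      (Set.mem_insert_of_mem _ (Set.mem_insert_of_mem _ (Set.mem_insert_of_mem _
        (Set.mem_insert_of_mem _ (Set.mem_insert_of_mem _ rfl)))))
    simp only [map_mul, map_pow, map_inv] at this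
    exact this
  -- derived relations in the 6-generator group
  have hA1 : a = e ^ n * (d ^ n * e * (d ^ n)⁻¹) * (e ^ n)⁻¹ := by
    have := k1; rw [k3] at this; exact this
  have hA2 : a = b ^ n * (d ^ n * b * (d ^ n)⁻¹) * (b ^ n)⁻¹ := by
    have := k6; rw [k4] at this; exact this
  have hbder : b = d ^ n * b ^ n * (d ^ n)⁻¹ * d * (d ^ n * b ^ n * (d ^ n)⁻¹)⁻¹ := by
    have hpow : f ^ n = d ^ n * b ^ n * (d ^ n)⁻¹ := by rw [k4, conj_pow]
    have := k5; rw [hpow] at this; exact this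
  have heder : e = d ^ n * e ^ n * (d ^ n)⁻¹ * d * (d ^ n * e ^ n * (d ^ n)⁻¹)⁻¹ := by
    have hpow : c ^ n = d ^ n * e ^ n * (d ^ n)⁻¹ := by rw [k3, conj_pow]
    have := k2; rw [hpow] at this; exact this
  -- derived relations in the 3-generator group
  have keyB : B = D ^ n * B ^ n * D * (B ^ n)⁻¹ * (D ^ n)⁻¹ := by rw [← h1]; group
  have keyE : E = D ^ n * E ^ n * D * (E ^ n)⁻¹ * (D ^ n)⁻¹ := by rw [← h2]; group
  -- the homomorphism conditions
  have hφ : ∀ r ∈ squareKnotDiagRels n, FreeGroup.lift (phiFun n) r = 1 := by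
    intro r hr
    simp only [squareKnotDiagRels, Set.mem_insert_iff, Set.mem_singleton_iff] at hr
    rcases hr with rfl | rfl | rfl | rfl | rfl | rfl <;>
      simp only [map_mul, map_pow, map_inv, FreeGroup.lift_apply_of,
        phiFun_0, phiFun_1, phiFun_2, phiFun_3, phiFun_4, phiFun_5, ← hB, ← hD, ← hE]
    · group
    · rw [conj_pow]
      calc E * (D ^ n * E ^ n * (D ^ n)⁻¹ * D * (D ^ n * E ^ n * (D ^ n)⁻¹)⁻¹)⁻¹
          = E * (D ^ n * E ^ n * D * (E ^ n)⁻¹ * (D ^ n)⁻¹)⁻¹ := by group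
        _ = E * E⁻¹ := by rw [← keyE]
        _ = 1 := by group
    · group
    · group
    · rw [conj_pow]
      calc B * (D ^ n * B ^ n * (D ^ n)⁻¹ * D * (D ^ n * B ^ n * (D ^ n)⁻¹)⁻¹)⁻¹
          = B * (D ^ n * B ^ n * D * (B ^ n)⁻¹ * (D ^ n)⁻¹)⁻¹ := by group
        _ = B * B⁻¹ := by rw [← keyB]
        _ = 1 := by group
    · calc E ^ n * (D ^ n * E * (D ^ n)⁻¹) * (E ^ n)⁻¹ *
            (B ^ n * (D ^ n * B * (D ^ n)⁻¹) * (B ^ n)⁻¹)⁻¹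
          = (E ^ n * D ^ n * E * (D ^ n)⁻¹ * (E ^ n)⁻¹) *
            (B ^ n * D ^ n * B * (D ^ n)⁻¹ * (B ^ n)⁻¹)⁻¹ := by group
        _ = 1 := by rw [h3]; group
  have hψ : ∀ r ∈ GnSKRels n, FreeGroup.lift (psiFun n) r = 1 := by
    intro r hr
    simp only [GnSKRels, Set.mem_insert_iff, Set.mem_singleton_iff] at hr
    rcases hr with rfl | rfl | rfl <;>
      simp only [map_mul, map_pow, map_inv, FreeGroup.lift_apply_of,
        psiFun_0, psiFun_1, psiFun_2, ← hb, ← hd, ← he]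
    · calc b * d ^ n * b ^ n * (d ^ n * b ^ n * d)⁻¹
          = b * (d ^ n * b ^ n * (d ^ n)⁻¹ * d * (d ^ n * b ^ n * (d ^ n)⁻¹)⁻¹)⁻¹ := by group
        _ = b * b⁻¹ := by rw [← hbder]
        _ = 1 := by group
    · calc e * d ^ n * e ^ n * (d ^ n * e ^ n * d)⁻¹
          = e * (d ^ n * e ^ n * (d ^ n)⁻¹ * d * (d ^ n * e ^ n * (d ^ n)⁻¹)⁻¹)⁻¹ := by group
        _ = e * e⁻¹ := by rw [← heder]
        _ = 1 := by group
    · calc e ^ n * d ^ n * e * (d ^ n)⁻¹ * (e ^ n)⁻¹ *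
            (b ^ n * d ^ n * b * (d ^ n)⁻¹ * (b ^ n)⁻¹)⁻¹
          = (e ^ n * (d ^ n * e * (d ^ n)⁻¹) * (e ^ n)⁻¹) *
            (b ^ n * (d ^ n * b * (d ^ n)⁻¹) * (b ^ n)⁻¹)⁻¹ := by group
        _ = a * a⁻¹ := by rw [← hA1, ← hA2]
        _ = 1 := by group
  refine ⟨MonoidHom.toMulEquiv (PresentedGroup.toGroup hφ) (PresentedGroup.toGroup hψ) ?_ ?_⟩
  · ext x
    fin_cases x
    · show (PresentedGroup.toGroup hψ) ((PresentedGroup.toGroup hφ)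
          (PresentedGroup.of (0 : Fin 6))) = PresentedGroup.of (0 : Fin 6)
      rw [PresentedGroup.toGroup.of, phiFun_0]
      simp only [map_mul, map_pow, map_inv, PresentedGroup.toGroup.of, psiFun_0, psiFun_1,
        psiFun_2]
      rw [← ha, ← hd, ← he, hA1]
    · show (PresentedGroup.toGroup hψ) ((PresentedGroup.toGroup hφ)
          (PresentedGroup.of (1 : Fin 6))) = PresentedGroup.of (1 : Fin 6)
      rw [PresentedGroup.toGroup.of, phiFun_1, PresentedGroup.toGroup.of, psiFun_0]
    · show (PresentedGroup.toGroup hψ) ((PresentedGroup.toGroup hφ)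
          (PresentedGroup.of (2 : Fin 6))) = PresentedGroup.of (2 : Fin 6)
      rw [PresentedGroup.toGroup.of, phiFun_2]
      simp only [map_mul, map_pow, map_inv, PresentedGroup.toGroup.of, psiFun_0, psiFun_1,
        psiFun_2]
      rw [← hc, ← hd, ← he, k3]
    · show (PresentedGroup.toGroup hψ) ((PresentedGroup.toGroup hφ)
          (PresentedGroup.of (3 : Fin 6))) = PresentedGroup.of (3 : Fin 6)
      rw [PresentedGroup.toGroup.of, phiFun_3, PresentedGroup.toGroup.of, psiFun_1]
    · show (PresentedGroup.toGroup hψ) ((PresentedGroup.toGroup hφ)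
          (PresentedGroup.of (4 : Fin 6))) = PresentedGroup.of (4 : Fin 6)
      rw [PresentedGroup.toGroup.of, phiFun_4, PresentedGroup.toGroup.of, psiFun_2]
    · show (PresentedGroup.toGroup hψ) ((PresentedGroup.toGroup hφ)
          (PresentedGroup.of (5 : Fin 6))) = PresentedGroup.of (5 : Fin 6)
      rw [PresentedGroup.toGroup.of, phiFun_5]
      simp only [map_mul, map_pow, map_inv, PresentedGroup.toGroup.of, psiFun_0, psiFun_1,
        psiFun_2]
      rw [← hf, ← hd, ← hb, k4]
  · ext x
    fin_cases x
    · show (PresentedGroup.toGroup hφ) ((PresentedGroup.toGroup hψ)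
          (PresentedGroup.of (0 : Fin 3))) = PresentedGroup.of (0 : Fin 3)
      rw [PresentedGroup.toGroup.of, psiFun_0, PresentedGroup.toGroup.of, phiFun_1]
    · show (PresentedGroup.toGroup hφ) ((PresentedGroup.toGroup hψ)
          (PresentedGroup.of (1 : Fin 3))) = PresentedGroup.of (1 : Fin 3)
      rw [PresentedGroup.toGroup.of, psiFun_1, PresentedGroup.toGroup.of, phiFun_3]
    · show (PresentedGroup.toGroup hφ) ((PresentedGroup.toGroup hψ)
          (PresentedGroup.of (2 : Fin 3))) = PresentedGroup.of (2 : Fin 3)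
      rw [PresentedGroup.toGroup.of, psiFun_2, PresentedGroup.toGroup.of, phiFun_4]
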